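/- The real unit interval [0,1] with Łukasiewicz MV-operations and δ_n(x) = x/n is a DMV-algebra, and these are the unique operations δ_n making [0,1]_MV into a DMV-algebra. -/

import Mathlib

/-- The operations of an MV-algebra ⟨A, ∧, ∨, ⊙, →, 0, 1⟩. -/
structure MVOps (α : Type*) where
  meet : α → α → α
  join : α → α → α
  odot : α → α → α
  impl : α → α → α
  zero : α
  one : α

namespace MVOps
variable {α : Type*}
/-- Negation ¬x = x → 0. -/
def neg (M : MVOps α) (x : α) : α := M.impl x M.zero
/-- x ⊕ y = ¬(¬x ⊙ ¬y). -/
def oplus (M : MVOps α) (x y : α) : α := M.neg (M.odot (M.neg x) (M.neg y))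
/-- n-fold ⊕-sum: 0·x = 0, (n+1)·x = n·x ⊕ x. -/
def nsum (M : MVOps α) : ℕ → α → α
  | 0, _ => M.zero
  | n + 1, x => M.oplus (M.nsum n x) x
end MVOps

/-- The MV-algebra axioms. -/
structure IsMVAlgebra {α : Type*} (M : MVOps α) : Prop where
  odot_comm : ∀ x y, M.odot x y = M.odot y x
  odot_assoc : ∀ x y z, M.odot (M.odot x y) z = M.odot x (M.odot y z)
  odot_one : ∀ x, M.odot x M.one = x
  meet_comm : ∀ x y, M.meet x y = M.meet y x
  meet_assoc : ∀ x y z, M.meet (M.meet x y) z = M.meet x (M.meet y z)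
  join_comm : ∀ x y, M.join x y = M.join y x
  join_assoc : ∀ x y z, M.join (M.join x y) z = M.join x (M.join y z)
  absorb_join_meet : ∀ x y, M.join x (M.meet x y) = x
  absorb_meet_join : ∀ x y, M.meet x (M.join x y) = x
  meet_one : ∀ x, M.meet x M.one = x
  join_zero : ∀ x, M.join x M.zero = x
  impl_odot : ∀ x y z, M.impl (M.odot x y) z = M.impl x (M.impl y z)
  ax4 : ∀ x y, M.meet (M.odot (M.impl x y) x) y = M.odot (M.impl x y) x
  ax5 : ∀ x y, M.impl (M.meet x y) y = M.one
  ax6 : ∀ x y, M.odot x (M.impl x y) = M.meet x y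
  ax7 : ∀ x y, M.join (M.impl x y) (M.impl y x) = M.one
  ax8 : ∀ x, M.impl (M.impl x M.zero) M.zero = x

/-- An MV-congruence: an equivalence relation compatible with all MV-operations. -/
def IsMVCong {α : Type*} (M : MVOps α) (r : α → α → Prop) : Prop :=
  Equivalence r ∧
  (∀ a b c d, r a b → r c d → r (M.meet a c) (M.meet b d)) ∧
  (∀ a b c d, r a b → r c d → r (M.join a c) (M.join b d)) ∧
  (∀ a b c d, r a b → r c d → r (M.odot a c) (M.odot b d)) ∧
  (∀ a b c d, r a b → r c d → r (M.impl a c) (M.impl b d))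

/-- Simplicity: nontrivial and the only congruences are the identity and the full one. -/
def IsSimpleMV {α : Type*} (M : MVOps α) : Prop :=
  Nontrivial α ∧ ∀ r : α → α → Prop, IsMVCong M r →
    (∀ x y, r x y ↔ x = y) ∨ (∀ x y, r x y)

/-- An MV-homomorphism. -/
structure IsMVHom {α : Type*} {β : Type*} (M : MVOps α) (N : MVOps β) (f : α → β) : Prop where
  map_zero : f M.zero = N.zero
  map_one : f M.one = N.one
  map_meet : ∀ x y, f (M.meet x y) = N.meet (f x) (f y)
  map_join : ∀ x y, f (M.join x y) = N.join (f x) (f y)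
  map_odot : ∀ x y, f (M.odot x y) = N.odot (f x) (f y)
  map_impl : ∀ x y, f (M.impl x y) = N.impl (f x) (f y)

/-- The standard MV-algebra on [0,1]: x⊙y = max(0, x+y−1), x→y = min(1, 1−x+y). -/
noncomputable def stdMV : MVOps unitInterval where
  meet x y := min x y
  join x y := max x y
  odot x y := ⟨max 0 (x.1 + y.1 - 1),
    le_max_left _ _, max_le zero_le_one (by linarith [x.2.2, y.2.2])⟩
  impl x y := ⟨min 1 (1 - x.1 + y.1),
    le_min zero_le_one (by linarith [x.2.2, y.2.1]), min_le_left _ _⟩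
  zero := 0
  one := 1

/-- A subset of an MV-algebra closed under all MV-operations. -/
structure IsMVSubalg {α : Type*} (M : MVOps α) (S : Set α) : Prop where
  zero_mem : M.zero ∈ S
  one_mem : M.one ∈ S
  meet_mem : ∀ x ∈ S, ∀ y ∈ S, M.meet x y ∈ S
  join_mem : ∀ x ∈ S, ∀ y ∈ S, M.join x y ∈ S
  odot_mem : ∀ x ∈ S, ∀ y ∈ S, M.odot x y ∈ S
  impl_mem : ∀ x ∈ S, ∀ y ∈ S, M.impl x y ∈ S

/-- The MV-operations restricted to a subalgebra. -/
def MVOps.restrict {α : Type*} (M : MVOps α) (S : Set α) (h : IsMVSubalg M S) : MVOps S where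
  meet x y := ⟨M.meet x y, h.meet_mem _ x.2 _ y.2⟩
  join x y := ⟨M.join x y, h.join_mem _ x.2 _ y.2⟩
  odot x y := ⟨M.odot x y, h.odot_mem _ x.2 _ y.2⟩
  impl x y := ⟨M.impl x y, h.impl_mem _ x.2 _ y.2⟩
  zero := ⟨M.zero, h.zero_mem⟩
  one := ⟨M.one, h.one_mem⟩

/-- A DMV-algebra: an MV-algebra with division operations δ_n (n ≥ 1) satisfying
n·δ_n(x) = x and δ_n(x) ⊙ (n−1)·δ_n(x) = 0. -/
def IsDMVAlgebra {α : Type*} (M : MVOps α) (δ : ℕ → α → α) : Prop :=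
  IsMVAlgebra M ∧
  ∀ n : ℕ, 1 ≤ n → ∀ x,
    M.nsum n (δ n x) = x ∧ M.odot (δ n x) (M.nsum (n - 1) (δ n x)) = M.zero

/-- A DMV-congruence: an MV-congruence also compatible with each δ_n. -/
def IsDMVCong {α : Type*} (M : MVOps α) (δ : ℕ → α → α) (r : α → α → Prop) : Prop :=
  IsMVCong M r ∧ ∀ n : ℕ, 1 ≤ n → ∀ a b, r a b → r (δ n a) (δ n b)

/-- Division by n on the unit interval: δ_n(x) = x / n. -/
noncomputable def stdDelta (n : ℕ) (x : unitInterval) : unitInterval :=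
  ⟨x.1 / n, div_nonneg x.2.1 (Nat.cast_nonneg n), by
    rcases Nat.eq_zero_or_pos n with h | h
    · simp [h]
    · rw [div_le_one (by exact_mod_cast h)]
      calc (x.1 : ℝ) ≤ 1 := x.2.2
        _ ≤ n := by exact_mod_cast h⟩

/-- [0,1] with δ_n(x) = x/n is a DMV-algebra, and these are the unique
operations making [0,1] a DMV-algebra. -/
lemma std_oplus_val (a b : unitInterval) :
    (stdMV.oplus a b).1 = min 1 (a.1 + b.1) := by
  simp only [MVOps.oplus, MVOps.neg, stdMV]
  have ha := a.2.1; have ha' := a.2.2; have hb := b.2.1; have hb' := b.2.2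
  simp only [Set.Icc.coe_zero]
  rcases le_total (a.1 + b.1) 1 with h | h <;>
    simp [max_def, min_def] <;> split_ifs <;> linarith

lemma std_nsum_zero_val (x : unitInterval) : (stdMV.nsum 0 x).1 = 0 := rfl

lemma std_nsum_val (n : ℕ) (hn : 1 ≤ n) (x : unitInterval) :
    (stdMV.nsum n x).1 = min 1 (n * x.1) := by
  induction n with
  | zero => omega
  | succ m ih =>
    rw [MVOps.nsum, std_oplus_val]
    rcases Nat.eq_zero_or_pos m with hm | hm
    · subst hm
      rw [std_nsum_zero_val]
      push_cast
      rw [zero_add, one_mul]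
    · rw [ih hm]
      have hx := x.2.1
      push_cast
      rcases le_total ((m : ℝ) * x.1) 1 with h | h
      · rw [min_eq_right h]; ring_nf
      · rw [min_eq_left h, min_eq_left (by linarith), min_eq_left (by nlinarith)]
lemma ui_min (a b : unitInterval) : ((min a b : unitInterval) : ℝ) = min a.1 b.1 := by
  rcases le_total a b with h | h
  · rw [min_eq_left h, min_eq_left (Subtype.coe_le_coe.mpr h)]
  · rw [min_eq_right h, min_eq_right (Subtype.coe_le_coe.mpr h)]

lemma ui_max (a b : unitInterval) : ((max a b : unitInterval) : ℝ) = max a.1 b.1 := by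
  rcases le_total a b with h | h
  · rw [max_eq_right h, max_eq_right (Subtype.coe_le_coe.mpr h)]
  · rw [max_eq_left h, max_eq_left (Subtype.coe_le_coe.mpr h)]

lemma std_isMV : IsMVAlgebra stdMV := by
  constructor <;>
  · intro x
    try intro y
    try intro z
    apply Subtype.ext
    simp only [stdMV, ui_min, ui_max,
      Set.Icc.coe_zero, Set.Icc.coe_one]
    simp only [min_def, max_def]
    split_ifs <;>
      first
      | rfl
      | linarith [x.2.1, x.2.2, y.2.1, y.2.2, z.2.1, z.2.2]
      | linarith [x.2.1, x.2.2, y.2.1, y.2.2]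
      | linarith [x.2.1, x.2.2]
lemma std_zero_val : (stdMV.zero : ℝ) = 0 := rfl

lemma std_odot_val (a b : unitInterval) :
    (stdMV.odot a b : ℝ) = max 0 (a.1 + b.1 - 1) := rfl

lemma std_delta_nsum (n : ℕ) (hn : 1 ≤ n) (x : unitInterval) :
    stdMV.nsum n (stdDelta n x) = x := by
  apply Subtype.ext
  rw [std_nsum_val n hn]
  have hn' : (0 : ℝ) < n := by exact_mod_cast hn
  have : (n : ℝ) * (x.1 / n) = x.1 := by field_simp
  rw [stdDelta, this, min_eq_right x.2.2]

theorem std_div_is_DMV_and_unique :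
    IsDMVAlgebra stdMV stdDelta ∧
    ∀ δ : ℕ → unitInterval → unitInterval, IsDMVAlgebra stdMV δ →
      ∀ n : ℕ, 1 ≤ n → δ n = stdDelta n := by
  constructor
  · refine ⟨std_isMV, fun n hn x => ⟨std_delta_nsum n hn x, ?_⟩⟩
    apply Subtype.ext
    have hn' : (0 : ℝ) < n := by exact_mod_cast hn
    have hd0 : (0:ℝ) ≤ x.1 / n := div_nonneg x.2.1 (le_of_lt hn')
    have hkey : (n : ℝ) * (x.1 / n) = x.1 := by field_simp
    have hsum : ((stdMV.nsum (n-1) (stdDelta n x)) : ℝ) ≤ (n - 1 : ℕ) * (x.1 / n) := by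
      rcases Nat.eq_zero_or_pos (n - 1) with h | h
      · rw [h, std_nsum_zero_val]; positivity
      · rw [std_nsum_val _ h]; exact min_le_right _ _
    rw [std_odot_val, std_zero_val]
    have hcast : ((n - 1 : ℕ) : ℝ) = (n : ℝ) - 1 := by
      have := Nat.cast_sub hn (R := ℝ); simpa using this
    have hx1 := x.2.2
    have hb : ((n - 1 : ℕ) : ℝ) * (x.1 / n) ≤ 1 - x.1 / n := by
      rw [hcast]; nlinarith [hkey, hd0]
    have hdv : (stdDelta n x : ℝ) = x.1 / n := rfl
    rw [hdv, max_eq_left (by linarith [hsum])]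
  · intro δ hδ n hn
    funext x
    obtain ⟨-, h⟩ := hδ
    obtain ⟨h1, h2⟩ := h n hn x
    set d := δ n x with hd
    have hn' : (0 : ℝ) < n := by exact_mod_cast hn
    have hd0 := d.2.1
    have hd1 := d.2.2
    have h2v : max 0 (d.1 + (stdMV.nsum (n-1) d : ℝ) - 1) = 0 := by
      rw [← std_odot_val]; exact congrArg Subtype.val h2
    have hle : d.1 + ((stdMV.nsum (n-1) d : ℝ)) - 1 ≤ 0 := by
      by_contra hc
      push_neg at hc
      rw [max_eq_right (le_of_lt hc)] at h2v
      linarith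
    have hnd : (n : ℝ) * d.1 ≤ 1 := by
      rcases Nat.eq_zero_or_pos (n - 1) with h0 | h0
      · have : n = 1 := by omega
        subst this
        simp only [Nat.cast_one, one_mul]
        exact hd1
      · have hcast : ((n - 1 : ℕ) : ℝ) = (n : ℝ) - 1 := by
          have := Nat.cast_sub hn (R := ℝ); simpa using this
        rw [std_nsum_val _ h0, hcast] at hle
        rcases le_total (((n : ℝ) - 1) * d.1) 1 with h' | h'
        · rw [min_eq_right h'] at hle
          nlinarith
        · rw [min_eq_left h'] at hle
          have hdz : d.1 = 0 := le_antisymm (by linarith) hd0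
          rw [hdz]
          norm_num
    have h1v : min 1 ((n:ℝ) * d.1) = x.1 := by
      rw [← std_nsum_val n hn d]; exact congrArg Subtype.val h1
    rw [min_eq_right hnd] at h1v
    apply Subtype.ext
    have hdv : (stdDelta n x : ℝ) = x.1 / n := rfl
    rw [hdv, ← h1v, mul_comm, mul_div_assoc, div_self (ne_of_gt hn'), mul_one]
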